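/- arXiv:1404.7770 — 3 statements merged into one kernel-verified Lean document; each statement's English description precedes it below -/
import Mathlib

section
/- For every finite game structure G with recurring certainty defined as below, the set of plays of G in which the grand coalition has recurring certainty is recognisable by a deterministic Büchi automaton; that is, there exist a finite state set Q, an initial state q₀ ∈ Q, a transition function δ : Q × (A × V) → Q, and a set F ⊆ Q of accepting states such that for every play π = v₀ a₀ v₁ a₁ … of G, the unique run of the automaton on the infinite word (a₀,v₁)(a₁,v₂)… visits F infinitely often if and only if π has recurring certainty. -/
/-- The state reached after following the word `w` (a list of (action profile, state) pairs)
starting from state `v`: the last state of `w`, or `v` if `w` is empty. -/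
def endFrom {α V : Type} : V → List (α × V) → V
  | v, [] => v
  | _, p :: w => endFrom p.2 w

/-- An `n`-player game structure with imperfect information: states `V` with an initial state,
action sets `A i` for each player, a total move relation labelled by action profiles,
observation functions `obs i : V → B i` for each player, and the observation function
`obs0 : V → B0` of the fictitious, less informed Player 0, which is a coarsening of
every player's observation. -/
structure GameStructure (n : ℕ) (V : Type) (A : Fin n → Type) (B : Fin n → Type)
    (B0 : Type) where
  init : V
  move : V → (∀ i, A i) → V → Prop
  move_total : ∀ v a, ∃ v', move v a v'
  obs : ∀ i : Fin n, V → B i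
  obs0 : V → B0
  obs0_coarse : ∀ v v' : V, (∃ i, obs i v = obs i v') → obs0 v = obs0 v'

namespace GameStructure

variable {n : ℕ} {V : Type} {A : Fin n → Type} {B : Fin n → Type} {B0 : Type}

variable (G : GameStructure n V A B B0)

/-- `G.IsHistFrom v w` holds if the word `w` describes a sequence of legal moves from `v`. -/
def IsHistFrom : V → List ((∀ i, A i) × V) → Prop
  | _, [] => True
  | v, p :: w => G.move v p.1 p.2 ∧ IsHistFrom p.2 w

/-- `w` encodes a history: a legal sequence of moves from the initial state.
The history `v₀ a₀ v₁ … a_{ℓ-1} v_ℓ` is encoded as the word `(a₀,v₁) … (a_{ℓ-1},v_ℓ)`. -/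
def IsHistWord (w : List ((∀ i, A i) × V)) : Prop := G.IsHistFrom G.init w

/-- The final state of the history encoded by `w`. -/
def endState (w : List ((∀ i, A i) × V)) : V := endFrom G.init w

/-- The sequence of Player 0's observations of the states of the history encoded by `w`
(the observation of the initial state is omitted, as it is fixed). Two histories are
`∼⁰`-indistinguishable iff their `obs0Trace`s are equal (which forces equal length). -/
def obs0Trace (w : List ((∀ i, A i) × V)) : List B0 := w.map fun p => G.obs0 p.2

/-- The grand coalition attains certainty at the history `w`: every history
`∼⁰`-indistinguishable from `w` ends at the same state. -/
def Certain (w : List ((∀ i, A i) × V)) : Prop :=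
  ∀ w', G.IsHistWord w' → G.obs0Trace w' = G.obs0Trace w → G.endState w' = G.endState w

/-- A play: an infinite legal sequence of states and action profiles from the initial state. -/
structure Play (G : GameStructure n V A B B0) where
  st : ℕ → V
  act : ℕ → ∀ i, A i
  init_eq : st 0 = G.init
  valid : ∀ k, G.move (st k) (act k) (st (k + 1))

/-- The word encoding the prefix history of length `ℓ` of the play `π`. -/
def Play.prefixWord {G : GameStructure n V A B B0} (π : G.Play) (ℓ : ℕ) :
    List ((∀ i, A i) × V) :=
  (List.range ℓ).map fun k => (π.act k, π.st (k + 1))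

/-- The play `π` has recurring certainty: the grand coalition attains certainty at
infinitely many of its finite prefixes. -/
def Play.HasRecurringCertainty {G : GameStructure n V A B B0} (π : G.Play) : Prop :=
  ∀ m : ℕ, ∃ ℓ, m ≤ ℓ ∧ G.Certain (π.prefixWord ℓ)

/-- The game structure `G` has recurring certainty: every play does. -/
def RecurringCertainty : Prop := ∀ π : G.Play, π.HasRecurringCertainty

/-- `G` has periodic certainty with bound `t`: along every play, every prefix history can be
extended by at most `t` further rounds, within the play, to a history at which the grand
coalition attains certainty. -/
def PeriodicWithBound (t : ℕ) : Prop :=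
  ∀ π : G.Play, ∀ m : ℕ, ∃ ℓ, m ≤ ℓ ∧ ℓ ≤ m + t ∧ G.Certain (π.prefixWord ℓ)

/-- `G` has periodic certainty: periodic certainty with some uniform bound `t`. -/
def PeriodicCertainty : Prop := ∃ t, G.PeriodicWithBound t

end GameStructure

/-- The run of a deterministic automaton with transition function `δ` and initial state `q0`
on an infinite word `x`: `runDet δ q0 x k` is the state reached after reading `k` letters. -/
def runDet {Q σ : Type} (δ : Q → σ → Q) (q0 : Q) (x : ℕ → σ) : ℕ → Q
  | 0 => q0
  | k + 1 => δ (runDet δ q0 x k) (x k)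

/-- The `k`-th letter of the play `π`, viewed as the infinite word
`(a₀,v₁)(a₁,v₂)…` over the alphabet `A × V`. -/
def GameStructure.Play.letter {n : ℕ} {V : Type} {A : Fin n → Type} {B : Fin n → Type}
    {B0 : Type} {G : GameStructure n V A B B0} (π : G.Play) (k : ℕ) : (∀ i, A i) × V :=
  (π.act k, π.st (k + 1))

lemma endFrom_append {α V : Type} (v : V) (w1 w2 : List (α × V)) :
    endFrom v (w1 ++ w2) = endFrom (endFrom v w1) w2 := by
  induction w1 generalizing v with
  | nil => rfl
  | cons p w ih => simp [endFrom, ih]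

namespace GameStructure

variable {n : ℕ} {V : Type} {A : Fin n → Type} {B : Fin n → Type} {B0 : Type}
variable (G : GameStructure n V A B B0)

lemma isHistFrom_append (v : V) (w1 w2 : List ((∀ i, A i) × V)) :
    G.IsHistFrom v (w1 ++ w2) ↔ G.IsHistFrom v w1 ∧ G.IsHistFrom (endFrom v w1) w2 := by
  induction w1 generalizing v with
  | nil => simp [IsHistFrom, endFrom]
  | cons p w ih => simp [IsHistFrom, endFrom, ih, and_assoc]

/-- The set of states reachable by some history with Player 0 observation trace `tr`. -/
def reach (tr : List B0) : Set V :=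
  {v | ∃ w, G.IsHistWord w ∧ G.obs0Trace w = tr ∧ G.endState w = v}

lemma reach_nil : G.reach ([] : List B0) = {G.init} := by
  ext v
  constructor
  · rintro ⟨w, _, htr, hend⟩
    have : w = [] := by simpa [obs0Trace] using htr
    subst this
    simpa [endState, endFrom] using hend.symm
  · rintro rfl
    exact ⟨[], trivial, rfl, rfl⟩

lemma reach_concat (tr : List B0) (b : B0) :
    G.reach (tr ++ [b]) =
      {v' | G.obs0 v' = b ∧ ∃ u ∈ G.reach tr, ∃ a, G.move u a v'} := by
  ext v'
  constructor
  · rintro ⟨w, hw, htr, hend⟩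
    rcases w.eq_nil_or_concat with rfl | ⟨w0, p, rfl⟩
    · simp [obs0Trace] at htr
    · rw [List.concat_eq_append] at hw htr hend
      have htr' : G.obs0Trace w0 ++ [G.obs0 p.2] = tr ++ [b] := by
        simpa [obs0Trace] using htr
      have hlen : (G.obs0Trace w0).length = tr.length := by
        have := congrArg List.length htr'
        simpa using this
      obtain ⟨h1, h2⟩ := List.append_inj htr' hlen
      have hb : G.obs0 p.2 = b := by simpa using h2
      have hhist := (G.isHistFrom_append G.init w0 [p]).mp hw
      have hendp : G.endState (w0 ++ [p]) = p.2 := by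
        simp [endState, endFrom_append, endFrom]
      refine ⟨by rw [← hend, hendp]; exact hb, G.endState w0, ⟨w0, hhist.1, h1, rfl⟩,
        p.1, ?_⟩
      have := hhist.2
      simp [IsHistFrom, endState] at this ⊢
      rw [← hend, hendp]
      exact this
  · rintro ⟨hb, u, ⟨w0, hw0, htr0, hend0⟩, a, hmove⟩
    refine ⟨w0 ++ [(a, v')], ?_, ?_, ?_⟩
    · rw [IsHistWord, G.isHistFrom_append]
      exact ⟨hw0, by simp [IsHistFrom]; rw [show endFrom G.init w0 = u from hend0]; exact hmove⟩
    · simpa [obs0Trace, hb] using htr0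
    · simp [endState, endFrom_append, endFrom]

lemma prefixWord_succ (π : G.Play) (ℓ : ℕ) :
    π.prefixWord (ℓ + 1) = π.prefixWord ℓ ++ [(π.act ℓ, π.st (ℓ + 1))] := by
  simp [Play.prefixWord, List.range_succ]

lemma prefixWord_isHistWord (π : G.Play) (ℓ : ℕ) :
    G.IsHistWord (π.prefixWord ℓ) ∧ G.endState (π.prefixWord ℓ) = π.st ℓ := by
  induction ℓ with
  | zero => exact ⟨trivial, π.init_eq.symm⟩
  | succ ℓ ih =>
    rw [G.prefixWord_succ]
    constructor
    · rw [IsHistWord, G.isHistFrom_append]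
      refine ⟨ih.1, ?_⟩
      simp [IsHistFrom]
      rw [show endFrom G.init (π.prefixWord ℓ) = π.st ℓ from ih.2]
      exact π.valid ℓ
    · simp [endState, endFrom_append, endFrom]

lemma run_eq (π : G.Play) (ℓ : ℕ) :
    runDet (fun (S : Set V) p =>
        {v' | G.obs0 v' = G.obs0 p.2 ∧ ∃ u ∈ S, ∃ a, G.move u a v'})
      {G.init} π.letter ℓ = G.reach (G.obs0Trace (π.prefixWord ℓ)) := by
  induction ℓ with
  | zero => simp [runDet, Play.prefixWord, obs0Trace, G.reach_nil]
  | succ ℓ ih =>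
    rw [runDet, ih, G.prefixWord_succ]
    have : G.obs0Trace (π.prefixWord ℓ ++ [(π.act ℓ, π.st (ℓ + 1))]) =
        G.obs0Trace (π.prefixWord ℓ) ++ [G.obs0 (π.st (ℓ + 1))] := by
      simp [obs0Trace]
    rw [this, G.reach_concat]
    rfl

lemma certain_iff (π : G.Play) (ℓ : ℕ) :
    G.Certain (π.prefixWord ℓ) ↔ (G.reach (G.obs0Trace (π.prefixWord ℓ))).Subsingleton := by
  obtain ⟨hhist, hend⟩ := G.prefixWord_isHistWord π ℓ
  constructor
  · intro hc v1 hv1 v2 hv2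
    obtain ⟨w1, hw1, ht1, he1⟩ := hv1
    obtain ⟨w2, hw2, ht2, he2⟩ := hv2
    rw [← he1, ← he2, hc w1 hw1 ht1, hc w2 hw2 ht2]
  · intro hs w' hw' ht'
    exact hs ⟨w', hw', ht', rfl⟩ ⟨π.prefixWord ℓ, hhist, rfl, rfl⟩

end GameStructure

/-- The set of plays of a finite game structure in which the grand coalition has recurring
certainty is recognisable by a deterministic Büchi automaton: there are a finite state set `Q`,
an initial state `q0`, a transition function `δ`, and accepting states `F` such that for every
play, the unique run visits `F` infinitely often iff the play has recurring certainty. -/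
theorem recurringCertainty_recognisable_by_deterministic_buchi
    {n : ℕ} {V : Type} {A : Fin n → Type} {B : Fin n → Type} {B0 : Type}
    (hn : 1 ≤ n) [Fintype V] [∀ i, Fintype (A i)] [∀ i, Nonempty (A i)]
    [∀ i, Fintype (B i)] [Fintype B0]
    (G : GameStructure n V A B B0) :
    ∃ (Q : Type) (_ : Fintype Q) (q0 : Q) (δ : Q → ((∀ i, A i) × V) → Q) (F : Set Q),
      ∀ π : G.Play,
        ((∀ m : ℕ, ∃ ℓ, m ≤ ℓ ∧ runDet δ q0 π.letter ℓ ∈ F) ↔ π.HasRecurringCertainty) := by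
  classical
  refine ⟨Set V, inferInstance, {G.init},
    (fun (S : Set V) p => {v' | G.obs0 v' = G.obs0 p.2 ∧ ∃ u ∈ S, ∃ a, G.move u a v'}),
    {S : Set V | S.Subsingleton}, fun π => ?_⟩
  have key : ∀ ℓ, (runDet (fun (S : Set V) p =>
      {v' | G.obs0 v' = G.obs0 p.2 ∧ ∃ u ∈ S, ∃ a, G.move u a v'}) {G.init} π.letter ℓ
        ∈ {S : Set V | S.Subsingleton}) ↔ G.Certain (π.prefixWord ℓ) := by
    intro ℓ
    rw [G.run_eq π ℓ]
    exact (G.certain_iff π ℓ).symm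
  constructor
  · intro h m
    obtain ⟨ℓ, hm, hℓ⟩ := h m
    exact ⟨ℓ, hm, (key ℓ).mp hℓ⟩
  · intro h m
    obtain ⟨ℓ, hm, hℓ⟩ := h m
    exact ⟨ℓ, hm, (key ℓ).mpr hℓ⟩
end

section
/- For every finite game structure G, the set of finite words over the alphabet A × V that encode histories of G at which the grand coalition does NOT attain certainty is a regular language, recognised by a nondeterministic finite automaton with at most |V|² + 1 states (pairs of game states tracking the input history and a nondeterministically guessed ∼^0-indistinguishable witness history ending at a different state, plus one sink state). -/
section AuxNFA

lemma mem_evalFrom_iff_exists {α σ : Type} (M : NFA α σ) :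
    ∀ (w : List α) (S : Set σ) (q : σ),
      q ∈ M.evalFrom S w ↔ ∃ s ∈ S, q ∈ M.evalFrom {s} w := by
  intro w
  induction w with
  | nil => intro S q; simp [NFA.evalFrom]
  | cons p w ih =>
    intro S q
    rw [show M.evalFrom S (p :: w) = M.evalFrom (M.stepSet S p) w from rfl, ih]
    constructor
    · rintro ⟨t, ht, hq⟩
      rw [NFA.mem_stepSet] at ht
      obtain ⟨s, hs, hts⟩ := ht
      refine ⟨s, hs, ?_⟩
      rw [show M.evalFrom {s} (p :: w) = M.evalFrom (M.stepSet {s} p) w from rfl, ih]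
      exact ⟨t, NFA.mem_stepSet.mpr ⟨s, rfl, hts⟩, hq⟩
    · rintro ⟨s, hs, hq⟩
      rw [show M.evalFrom {s} (p :: w) = M.evalFrom (M.stepSet {s} p) w from rfl, ih] at hq
      obtain ⟨t, ht, hq⟩ := hq
      rw [NFA.mem_stepSet] at ht
      obtain ⟨s', hs', hts⟩ := ht
      simp only [Set.mem_singleton_iff] at hs'
      subst hs'
      exact ⟨t, NFA.mem_stepSet.mpr ⟨s', hs, hts⟩, hq⟩

variable {n : ℕ} {V : Type} {A : Fin n → Type} {B : Fin n → Type} {B0 : Type}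

/-- The NFA recognising uncertain histories: states are pairs (input end state, witness end
state). -/
def uncertainNFA (G : GameStructure n V A B B0) : NFA ((∀ i, A i) × V) (V × V) where
  step := fun q p =>
    { q' | q'.1 = p.2 ∧ G.move q.1 p.1 p.2 ∧
        ∃ a', G.move q.2 a' q'.2 ∧ G.obs0 q'.2 = G.obs0 p.2 }
  start := {(G.init, G.init)}
  accept := { q | q.1 ≠ q.2 }

lemma uncertainNFA_eval (G : GameStructure n V A B B0) :
    ∀ (w : List ((∀ i, A i) × V)) (v v' : V) (q : V × V),
      q ∈ (uncertainNFA G).evalFrom {(v, v')} w ↔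
        (G.IsHistFrom v w ∧ q.1 = endFrom v w ∧
          ∃ w', G.IsHistFrom v' w' ∧ G.obs0Trace w' = G.obs0Trace w ∧
            q.2 = endFrom v' w') := by
  intro w
  induction w with
  | nil =>
    intro v v' q
    simp only [NFA.evalFrom, List.foldl_nil, Set.mem_singleton_iff]
    constructor
    · rintro rfl
      exact ⟨trivial, rfl, [], trivial, rfl, rfl⟩
    · rintro ⟨-, h1, w', hw', htr, h2⟩
      cases w' with
      | nil =>
        obtain ⟨q1, q2⟩ := q
        simp only [endFrom] at h1 h2
        simp [h1, h2]
      | cons p w'' => simp [GameStructure.obs0Trace] at htr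
  | cons p w ih =>
    intro v v' q
    rw [show (uncertainNFA G).evalFrom {(v, v')} (p :: w)
          = (uncertainNFA G).evalFrom ((uncertainNFA G).stepSet {(v, v')} p) w from rfl,
        mem_evalFrom_iff_exists]
    constructor
    · rintro ⟨t, ht, hq⟩
      rw [NFA.mem_stepSet] at ht
      obtain ⟨s, hs, hts⟩ := ht
      simp only [Set.mem_singleton_iff] at hs
      subst hs
      obtain ⟨ht1, hmv, a', hmv', hobs⟩ := hts
      obtain ⟨t1, t2⟩ := t
      simp only at ht1
      subst ht1
      rw [ih] at hq
      obtain ⟨hhist, hq1, w'', hw'', htr, hq2⟩ := hq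
      refine ⟨⟨hmv, hhist⟩, hq1, (a', t2) :: w'', ⟨hmv', hw''⟩, ?_, hq2⟩
      simp [GameStructure.obs0Trace] at htr ⊢
      exact ⟨hobs, htr⟩
    · rintro ⟨⟨hmv, hhist⟩, hq1, w', hw', htr, hq2⟩
      cases w' with
      | nil => simp [GameStructure.obs0Trace] at htr
      | cons p' w'' =>
        obtain ⟨hmv', hw''⟩ := hw'
        simp only [GameStructure.obs0Trace, List.map_cons, List.cons.injEq] at htr
        obtain ⟨hobs, htr⟩ := htr
        refine ⟨(p.2, p'.2), ?_, ?_⟩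
        · exact NFA.mem_stepSet.mpr ⟨(v, v'), rfl, rfl, hmv, p'.1, hmv', hobs⟩
        · rw [ih]
          exact ⟨hhist, hq1, w'', hw'', htr, hq2⟩

end AuxNFA

/-- The set of words over `A × V` encoding histories at which the grand coalition does NOT
attain certainty is regular, recognised by an NFA with at most `|V|² + 1` states. -/
theorem uncertain_histories_recognisable_by_nfa
    {n : ℕ} {V : Type} {A : Fin n → Type} {B : Fin n → Type} {B0 : Type}
    (hn : 1 ≤ n) [Fintype V] [∀ i, Fintype (A i)] [∀ i, Nonempty (A i)]
    [∀ i, Fintype (B i)] [Fintype B0]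
    (G : GameStructure n V A B B0) :
    ∃ (Q : Type) (_ : Fintype Q) (M : NFA ((∀ i, A i) × V) Q),
      Fintype.card Q ≤ Fintype.card V ^ 2 + 1 ∧
      ∀ w : List ((∀ i, A i) × V),
        w ∈ M.accepts ↔ (G.IsHistWord w ∧ ¬ G.Certain w) := by
  refine ⟨V × V, inferInstance, uncertainNFA G, ?_, ?_⟩
  · rw [Fintype.card_prod, ← sq]
    exact Nat.le_succ _
  · intro w
    rw [NFA.mem_accepts]
    constructor
    · rintro ⟨q, hacc, hq⟩
      rw [show (uncertainNFA G).start = {(G.init, G.init)} from rfl,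
        uncertainNFA_eval] at hq
      obtain ⟨hhist, hq1, w', hw', htr, hq2⟩ := hq
      refine ⟨hhist, fun hc => ?_⟩
      have := hc w' hw' htr
      apply hacc
      rw [hq1, hq2]
      exact this.symm
    · rintro ⟨hhist, hnc⟩
      simp only [GameStructure.Certain, not_forall] at hnc
      obtain ⟨w', hw', htr, hne⟩ := hnc
      refine ⟨(G.endState w, G.endState w'), fun h => hne ?_, ?_⟩
      · exact h.symm
      · rw [show (uncertainNFA G).start = {(G.init, G.init)} from rfl,
          uncertainNFA_eval]
        exact ⟨hhist, rfl, w', hw', htr, rfl⟩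
end

section
/- For every finite game structure G, the set of finite words over the alphabet A × V that encode histories of G at which the grand coalition attains certainty is a regular language. -/
namespace GameStructure

variable {n : ℕ} {V : Type} {A : Fin n → Type} {B : Fin n → Type} {B0 : Type}

variable (G : GameStructure n V A B B0)

lemma endFrom_concat (v : V) (w : List ((∀ i, A i) × V)) (p : (∀ i, A i) × V) :
    endFrom v (w ++ [p]) = p.2 := by
  induction w generalizing v with
  | nil => rfl
  | cons q w ih => simpa [endFrom] using ih q.2

lemma isHistFrom_concat (v : V) (w : List ((∀ i, A i) × V)) (p : (∀ i, A i) × V) :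
    G.IsHistFrom v (w ++ [p]) ↔ G.IsHistFrom v w ∧ G.move (endFrom v w) p.1 p.2 := by
  induction w generalizing v with
  | nil => simp [IsHistFrom, endFrom]
  | cons q w ih => simp [IsHistFrom, endFrom, ih, and_assoc]

/-- The knowledge set of Player 0 after the word `w`: the possible end states of histories
indistinguishable from `w`. -/
def KSet (w : List ((∀ i, A i) × V)) : Set V :=
  {u | ∃ w', G.IsHistWord w' ∧ G.obs0Trace w' = G.obs0Trace w ∧ G.endState w' = u}

lemma KSet_nil : G.KSet [] = {G.init} := by
  ext u
  simp only [KSet, Set.mem_setOf_eq, Set.mem_singleton_iff]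
  constructor
  · rintro ⟨w', hw', htr, rfl⟩
    have : w' = [] := by simpa [obs0Trace] using htr
    subst this; rfl
  · rintro rfl; exact ⟨[], trivial, rfl, rfl⟩

lemma KSet_concat (w : List ((∀ i, A i) × V)) (p : (∀ i, A i) × V) :
    G.KSet (w ++ [p]) =
      {u' | ∃ u ∈ G.KSet w, ∃ b, G.move u b u' ∧ G.obs0 u' = G.obs0 p.2} := by
  ext u'
  simp only [KSet, Set.mem_setOf_eq]
  constructor
  · rintro ⟨w'', hist, htr, heq⟩
    rcases w''.eq_nil_or_concat with rfl | ⟨w₂, q, rfl⟩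
    · exfalso
      have := congrArg List.length htr
      simp [obs0Trace] at this
    · simp only [List.concat_eq_append] at hist htr heq
      have hlen : (List.map (fun p => G.obs0 p.2) w₂).length + 1 =
          (List.map (fun p => G.obs0 p.2) w).length + 1 := by
        have := congrArg List.length htr
        simpa [obs0Trace] using this
      have htr' : (List.map (fun p => G.obs0 p.2) w₂) ++ [G.obs0 q.2] =
          (List.map (fun p => G.obs0 p.2) w) ++ [G.obs0 p.2] := by
        simpa [obs0Trace] using htr
      have h := List.append_inj' htr' rfl
      obtain ⟨hist2, hmove⟩ := (G.isHistFrom_concat G.init w₂ q).mp hist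
      have hend : G.endState (w₂ ++ [q]) = q.2 := endFrom_concat _ _ _
      refine ⟨endFrom G.init w₂, ⟨w₂, hist2, h.1, rfl⟩, q.1, ?_, ?_⟩
      · rw [← heq, hend]; exact hmove
      · rw [← heq, hend]; simpa using h.2
  · rintro ⟨u, ⟨w', hist', htr', hend'⟩, b, hmove, hobs⟩
    refine ⟨w' ++ [(b, u')], ?_, ?_, ?_⟩
    · exact (G.isHistFrom_concat G.init w' _).mpr ⟨hist', by rw [show endFrom G.init w' = u from hend']; exact hmove⟩
    · simp only [obs0Trace, List.map_append, List.map_cons, List.map_nil]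
      rw [show (List.map (fun p => G.obs0 p.2) w') = List.map (fun p => G.obs0 p.2) w from htr']
      simp [hobs]
    · exact endFrom_concat _ _ _

open Classical in
/-- The subset-construction DFA tracking the actual end state and the knowledge set. -/
noncomputable def certDFA : DFA ((∀ i, A i) × V) (Option (V × Set V)) where
  step q p :=
    match q with
    | none => none
    | some (v, S) =>
        if G.move v p.1 p.2 then
          some (p.2, {u' | ∃ u ∈ S, ∃ b, G.move u b u' ∧ G.obs0 u' = G.obs0 p.2})
        else none
  start := some (G.init, {G.init})
  accept := {q | ∃ v S, q = some (v, S) ∧ S ⊆ {v}}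

open Classical in
lemma certDFA_eval (w : List ((∀ i, A i) × V)) :
    G.certDFA.eval w =
      if G.IsHistWord w then some (G.endState w, G.KSet w) else none := by
  induction w using List.reverseRecOn with
  | nil =>
      simp [DFA.eval, DFA.evalFrom, certDFA, IsHistWord, IsHistFrom, endState, endFrom,
        KSet_nil]
  | append_singleton w p ih =>
      rw [DFA.eval, DFA.evalFrom_append_singleton]
      rw [DFA.eval] at ih
      rw [ih]
      by_cases h : G.IsHistWord w
      · rw [if_pos h]
        by_cases hm : G.move (G.endState w) p.1 p.2
        · have hw' : G.IsHistWord (w ++ [p]) := (G.isHistFrom_concat _ _ _).mpr ⟨h, hm⟩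
          rw [if_pos hw']
          show (if G.move (G.endState w) p.1 p.2 then _ else _) = _
          rw [if_pos hm]
          have h1 : G.endState (w ++ [p]) = p.2 := endFrom_concat _ _ _
          rw [h1, KSet_concat]
        · have hw' : ¬ G.IsHistWord (w ++ [p]) := by
            intro hc
            exact hm ((G.isHistFrom_concat _ _ _).mp hc).2
          rw [if_neg hw']
          show (if G.move (G.endState w) p.1 p.2 then _ else _) = _
          rw [if_neg hm]
      · have hw' : ¬ G.IsHistWord (w ++ [p]) := by
          intro hc
          exact h ((G.isHistFrom_concat _ _ _).mp hc).1
        rw [if_neg h, if_neg hw']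
        rfl

end GameStructure

/-- The set of words over `A × V` encoding histories at which the grand coalition attains
certainty is a regular language (recognised by a deterministic finite automaton). -/
theorem certain_histories_regular
    {n : ℕ} {V : Type} {A : Fin n → Type} {B : Fin n → Type} {B0 : Type}
    (hn : 1 ≤ n) [Fintype V] [∀ i, Fintype (A i)] [∀ i, Nonempty (A i)]
    [∀ i, Fintype (B i)] [Fintype B0]
    (G : GameStructure n V A B B0) :
    ∃ (Q : Type) (_ : Fintype Q) (M : DFA ((∀ i, A i) × V) Q),
      ∀ w : List ((∀ i, A i) × V),
        w ∈ M.accepts ↔ (G.IsHistWord w ∧ G.Certain w) := by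
  classical
  refine ⟨Option (V × Set V), inferInstance, G.certDFA, fun w => ?_⟩
  rw [DFA.mem_accepts]
  show G.certDFA.eval w ∈ G.certDFA.accept ↔ _
  rw [G.certDFA_eval]
  by_cases h : G.IsHistWord w
  · rw [if_pos h]
    constructor
    · rintro ⟨v, S, hq, hsub⟩
      refine ⟨h, fun w' hw' htr => ?_⟩
      have h1 : G.endState w = v := by injection hq with hq'; exact (congrArg Prod.fst hq')
      have h2 : G.KSet w = S := by injection hq with hq'; exact (congrArg Prod.snd hq')
      have : G.endState w' ∈ G.KSet w := ⟨w', hw', htr, rfl⟩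
      rw [h2] at this
      have := hsub this
      rw [h1]
      simpa using this
    · rintro ⟨-, hcert⟩
      refine ⟨G.endState w, G.KSet w, rfl, ?_⟩
      rintro u ⟨w', hw', htr, rfl⟩
      exact hcert w' hw' htr
  · rw [if_neg h]
    constructor
    · rintro ⟨v, S, hq, -⟩
      exact absurd hq (by simp)
    · rintro ⟨hw, -⟩
      exact absurd hw h
end
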